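/- Let n ≥ 2 and 1 ≤ k ≤ n. Every k-dimensional linear subspace W of ℂⁿ lies in the B_{n−1}-orbit of exactly one subspace from the following list: (1) span{e_{j_1},…,e_{j_k}} for a k-element subset {j_1,…,j_k} of {1,…,n−1}; (2) span{e_{j_1},…,e_{j_{k−1}}, e_n} for a (k−1)-element subset {j_1,…,j_{k−1}} of {1,…,n−1}; (3) span{e_{j_1},…,e_{j_{k−1}}, e_{j_k}+e_n} for a k-element subset {j_1,…,j_k} of {1,…,n−1} together with a distinguished element j_k of that subset. Moreover, no two distinct subspaces from this list lie in the same B_{n−1}-orbit. -/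

import Mathlib

open scoped BigOperators

noncomputable section

/-- Membership in the subgroup `B_{n-1}` of `GL(n, ℂ)`: invertible upper triangular matrices
`g` with `g ₙₙ = 1` and `g ᵢₙ = 0` for `i < n` (indices `0, …, n-1`; the last index plays
the role of `n`). -/
def memB (n : ℕ) (g : Matrix (Fin n) (Fin n) ℂ) : Prop :=
  IsUnit g ∧
  (∀ i j : Fin n, (j : ℕ) < (i : ℕ) → g i j = 0) ∧
  (∀ i : Fin n, (i : ℕ) + 1 = n → g i i = 1) ∧
  (∀ i j : Fin n, (j : ℕ) + 1 = n → (i : ℕ) + 1 ≠ n → g i j = 0)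

/-- A complete flag `V₁ ⊂ V₂ ⊂ ⋯ ⊂ Vₙ = ℂⁿ` in `ℂⁿ` (so `V i` has dimension `i + 1`
for the 0-indexed `i : Fin n`). -/
structure CompleteFlag (n : ℕ) where
  V : Fin n → Submodule ℂ (Fin n → ℂ)
  mono : ∀ i j : Fin n, i ≤ j → V i ≤ V j
  dimV : ∀ i : Fin n, Module.finrank ℂ (V i) = (i : ℕ) + 1

/-- Two complete flags lie in the same `B_{n-1}`-orbit:
`F = g · F'` for some `g ∈ B_{n-1}`. -/
def flagRel (n : ℕ) (F F' : CompleteFlag n) : Prop :=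
  ∃ g : Matrix (Fin n) (Fin n) ℂ, memB n g ∧
    ∀ i, (F'.V i).map (Matrix.toLin' g) = F.V i

/-- The standard basis vector `e_{j+1}` of `ℂⁿ` (for the 0-indexed `j : Fin n`). -/
def stdVec (n : ℕ) (j : Fin n) : Fin n → ℂ := Pi.single j 1

/-- The hat vector `ê_{j+1} = e_{j+1} + e_n` of `ℂⁿ` (for the 0-indexed `j : Fin n`,
meaningful when `j + 1 < n`). -/
def hatVec (n : ℕ) (j : Fin n) : Fin n → ℂ :=
  Pi.single j 1 + Pi.single (⟨n - 1, by have := j.isLt; omega⟩ : Fin n) 1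

/-- The list of representative subspaces for `B_{n-1}`-orbits on the Grassmannian of
`k`-planes in `ℂⁿ`: (1) spans of standard basis vectors `e_j`, `j ≤ n-1`; (2) spans of
`k-1` such vectors together with `e_n`; (3) spans of `k-1` such vectors together with a
hat vector `e_{j₀} + e_n`. -/
def repSet (n k : ℕ) (hn : 1 ≤ n) : Set (Submodule ℂ (Fin n → ℂ)) :=
  {W | ∃ J : Finset (Fin n), (∀ j ∈ J, (j : ℕ) + 1 < n) ∧ J.card = k ∧
      W = Submodule.span ℂ (stdVec n '' ↑J)} ∪
  {W | ∃ J : Finset (Fin n), (∀ j ∈ J, (j : ℕ) + 1 < n) ∧ J.card + 1 = k ∧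
      W = Submodule.span ℂ
        (insert (stdVec n (⟨n - 1, by omega⟩ : Fin n)) (stdVec n '' ↑J))} ∪
  {W | ∃ (J : Finset (Fin n)) (j₀ : Fin n), j₀ ∈ J ∧ (∀ j ∈ J, (j : ℕ) + 1 < n) ∧
      J.card = k ∧
      W = Submodule.span ℂ (insert (hatVec n j₀) (stdVec n '' ↑(J.erase j₀)))}


namespace S15
open Matrix Submodule Module Finset

variable {n : ℕ}

def KS (n : ℕ) (S : Finset (Fin n)) : Submodule ℂ (Fin n → ℂ) where
  carrier := {x | ∀ j ∉ S, x j = 0}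
  add_mem' hx hy j hj := by simp only [Pi.add_apply, hx j hj, hy j hj, add_zero]
  zero_mem' j _ := rfl
  smul_mem' c x hx j hj := by simp only [Pi.smul_apply, hx j hj, smul_zero]

lemma mem_KS {S : Finset (Fin n)} {x : Fin n → ℂ} : x ∈ KS n S ↔ ∀ j ∉ S, x j = 0 := Iff.rfl

/-- `KS S` is linearly equivalent to `S → ℂ`. -/
def KSequiv (S : Finset (Fin n)) : KS n S ≃ₗ[ℂ] (S → ℂ) where
  toFun x j := x.1 j
  map_add' x y := rfl
  map_smul' c x := rfl
  invFun c := ⟨fun j => if h : j ∈ S then c ⟨j, h⟩ else 0, fun j hj => by simp [hj]⟩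
  left_inv x := by
    ext j
    by_cases h : j ∈ S <;> simp [h]
    exact (x.2 j h).symm
  right_inv c := by ext j; simp

lemma finrank_KS (S : Finset (Fin n)) : finrank ℂ (KS n S) = S.card := by
  rw [(KSequiv S).finrank_eq]
  simp [Module.finrank_fintype_fun_eq_card]

lemma stdVec_mem_KS {S : Finset (Fin n)} {j : Fin n} (hj : j ∈ S) : stdVec n j ∈ KS n S := by
  intro i hi
  exact Pi.single_eq_of_ne (fun h : i = j => hi (h ▸ hj)) 1

lemma span_stdVec (S : Finset (Fin n)) : span ℂ (stdVec n '' ↑S) = KS n S := by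
  apply le_antisymm
  · rw [span_le]
    rintro _ ⟨j, hj, rfl⟩
    exact stdVec_mem_KS (by exact_mod_cast hj)
  · intro x hx
    have hxs : x = ∑ j ∈ S, x j • stdVec n j := by
      funext i
      simp only [Finset.sum_apply, Pi.smul_apply, stdVec, Pi.single_apply, smul_eq_mul,
        mul_ite, mul_one, mul_zero]
      rw [Finset.sum_ite_eq S i x]
      split_ifs with h
      · rfl
      · exact hx i h
    rw [hxs]
    exact Submodule.sum_mem _ fun j hj =>
      Submodule.smul_mem _ _ (subset_span ⟨j, by simpa using hj, rfl⟩)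


-- last index
def LL (n : ℕ) (hn : 0 < n) : Fin n := ⟨n - 1, by omega⟩

def Emod (n i : ℕ) : Submodule ℂ (Fin n → ℂ) := KS n (univ.filter fun j => (j : ℕ) < i)

lemma mem_Emod {i : ℕ} {x : Fin n → ℂ} : x ∈ Emod n i ↔ ∀ j : Fin n, i ≤ (j : ℕ) → x j = 0 := by
  constructor
  · intro h j hj; exact h j (by simp; omega)
  · intro h j hj; exact h j (by simpa using hj)

def Eh (n i : ℕ) (hn : 0 < n) : Submodule ℂ (Fin n → ℂ) :=
  KS n (insert (LL n hn) (univ.filter fun j => (j : ℕ) < i))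

lemma mem_Eh {i : ℕ} {hn : 0 < n} {x : Fin n → ℂ} :
    x ∈ Eh n i hn ↔ ∀ j : Fin n, i ≤ (j : ℕ) → j ≠ LL n hn → x j = 0 := by
  constructor
  · intro h j hj hjL; exact h j (by simp [hjL]; omega)
  · intro h j hj
    simp only [Finset.mem_insert, Finset.mem_filter, Finset.mem_univ, true_and, not_or, not_lt] at hj
    exact h j hj.2 hj.1

lemma Emod_of_le (h : n ≤ i) : Emod n i = ⊤ := by
  rw [eq_top_iff]
  intro x _ j hj
  simp only [Finset.mem_filter, Finset.mem_univ, true_and, not_lt] at hj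
  exact absurd j.isLt (by omega)

/-- The "hat" subspace: support in `J ∪ {last}`, with last coordinate equal to the `j₀`
coordinate. -/
def HS (n : ℕ) (J : Finset (Fin n)) (j₀ : Fin n) (hn : 0 < n) : Submodule ℂ (Fin n → ℂ) where
  carrier := {x | (∀ j ∉ insert (LL n hn) J, x j = 0) ∧ x (LL n hn) = x j₀}
  add_mem' := by
    rintro x y ⟨hx1, hx2⟩ ⟨hy1, hy2⟩
    refine ⟨fun j hj => by simp [hx1 j hj, hy1 j hj], by simp [hx2, hy2]⟩
  zero_mem' := ⟨fun j _ => rfl, rfl⟩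
  smul_mem' := by
    rintro c x ⟨hx1, hx2⟩
    refine ⟨fun j hj => by simp [hx1 j hj], by simp [hx2]⟩

lemma mem_HS {J : Finset (Fin n)} {j₀ : Fin n} {hn : 0 < n} {x : Fin n → ℂ} :
    x ∈ HS n J j₀ hn ↔ (∀ j ∉ insert (LL n hn) J, x j = 0) ∧ x (LL n hn) = x j₀ := Iff.rfl

def HSequiv (J : Finset (Fin n)) (j₀ : Fin n) (hn : 0 < n) (hj₀ : j₀ ∈ J)
    (hL : LL n hn ∉ J) : HS n J j₀ hn ≃ₗ[ℂ] (J → ℂ) where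
  toFun x j := x.1 j
  map_add' x y := rfl
  map_smul' c x := rfl
  invFun c := ⟨fun j => if h : j ∈ J then c ⟨j, h⟩ else if j = LL n hn then c ⟨j₀, hj₀⟩ else 0,
    by
      constructor
      · intro j hj
        simp only [Finset.mem_insert, not_or] at hj
        simp [hj.1, hj.2]
      · simp [hL, fun h : LL n hn = j₀ => hL (h ▸ hj₀), hj₀]⟩
  left_inv x := by
    ext j
    by_cases h : j ∈ J
    · simp [h]
    · by_cases hjl : j = LL n hn
      · subst hjl
        simp [h, x.2.2]
      · simp only [h, hjl, dif_neg, if_neg, not_false_iff]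
        exact (x.2.1 j (by simp [h, hjl])).symm
  right_inv c := by ext j; simp [j.2]

lemma finrank_HS (J : Finset (Fin n)) (j₀ : Fin n) (hn : 0 < n) (hj₀ : j₀ ∈ J)
    (hL : LL n hn ∉ J) : finrank ℂ (HS n J j₀ hn) = J.card := by
  rw [(HSequiv J j₀ hn hj₀ hL).finrank_eq]
  simp [Module.finrank_fintype_fun_eq_card]

lemma hatVec_eq {j₀ : Fin n} (hn : 0 < n) :
    hatVec n j₀ = Pi.single j₀ 1 + Pi.single (LL n hn) 1 := rfl

lemma span_hat (J : Finset (Fin n)) (j₀ : Fin n) (hn : 0 < n) (hj₀ : j₀ ∈ J)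
    (hL : LL n hn ∉ J) :
    span ℂ (insert (hatVec n j₀) (stdVec n '' ↑(J.erase j₀))) = HS n J j₀ hn := by
  have hj₀L : j₀ ≠ LL n hn := fun h => hL (h ▸ hj₀)
  apply le_antisymm
  · rw [span_le]
    rintro _ (rfl | ⟨j, hj, rfl⟩)
    · rw [SetLike.mem_coe, mem_HS]
      constructor
      · intro j hj
        simp only [Finset.mem_insert, not_or] at hj
        rw [hatVec_eq hn]
        have hne : j ≠ j₀ := fun h => hj.2 (h ▸ hj₀)
        simp [Pi.single_apply, hne, hj.1]
      · rw [hatVec_eq hn]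
        simp [Pi.single_apply, hj₀L, hj₀L.symm]
    · rw [Finset.coe_erase] at hj
      rw [SetLike.mem_coe, mem_HS]
      obtain ⟨hjJ, hjne⟩ := hj
      constructor
      · intro i hi
        simp only [Finset.mem_insert, not_or] at hi
        exact Pi.single_eq_of_ne (fun h : i = j => hi.2 (h ▸ hjJ)) 1
      · rw [stdVec, Pi.single_eq_of_ne (fun h : LL n hn = j => hL (h ▸ hjJ)) 1,
          Pi.single_eq_of_ne (by simpa [eq_comm] using hjne : j₀ ≠ j) 1]
  · intro x hx
    rw [mem_HS] at hx
    have hy : x - x j₀ • hatVec n j₀ ∈ span ℂ (stdVec n '' ↑(J.erase j₀)) := by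
      rw [span_stdVec, mem_KS]
      intro j hj
      simp only [Finset.mem_erase, not_and] at hj
      rw [hatVec_eq hn]
      by_cases h1 : j = j₀
      · subst h1; simp [Pi.single_apply, hj₀L, hj₀L.symm]
      · by_cases h2 : j = LL n hn
        · subst h2
          simp [Pi.single_apply, hj₀L.symm, hx.2]
        · have : x j = 0 := hx.1 j (by
            simp only [Finset.mem_insert, not_or]
            exact ⟨h2, hj h1⟩)
          simp [Pi.single_apply, h1, h2, this]
    have : x = (x - x j₀ • hatVec n j₀) + x j₀ • hatVec n j₀ := by ring_nf
    rw [this]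
    refine Submodule.add_mem _ (span_mono (Set.subset_insert _ _) hy) ?_
    exact Submodule.smul_mem _ _ (subset_span (Set.mem_insert _ _))

lemma KS_inf_KS (S T : Finset (Fin n)) : KS n S ⊓ KS n T = KS n (S ∩ T) := by
  ext x
  simp only [Submodule.mem_inf, mem_KS, Finset.mem_inter, not_and]
  constructor
  · rintro ⟨h1, h2⟩ j hj
    by_cases hS : j ∈ S
    · exact h2 j (hj hS)
    · exact h1 j hS
  · intro h
    exact ⟨fun j hj => h j (fun hS => absurd hS hj), fun j hj => h j (fun _ => hj)⟩

def cnt (J : Finset (Fin n)) (i : ℕ) : ℕ := (J.filter fun j : Fin n => (j : ℕ) < i).card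

lemma cnt_zero (J : Finset (Fin n)) : cnt J 0 = 0 := by simp [cnt]

lemma cnt_succ (J : Finset (Fin n)) {i : ℕ} (hi : i < n) :
    cnt J (i + 1) = cnt J i + if (⟨i, hi⟩ : Fin n) ∈ J then 1 else 0 := by
  have h1 : J.filter (fun j : Fin n => (j : ℕ) < i + 1) =
      J.filter (fun j : Fin n => (j : ℕ) < i) ∪ J.filter (fun j : Fin n => j = (⟨i, hi⟩ : Fin n)) := by
    ext j
    simp only [Finset.mem_filter, Finset.mem_union, Fin.ext_iff]
    constructor
    · rintro ⟨hj, h⟩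
      rcases Nat.lt_succ_iff_lt_or_eq.mp h with h | h
      · exact Or.inl ⟨hj, h⟩
      · exact Or.inr ⟨hj, h⟩
    · rintro (⟨hj, h⟩ | ⟨hj, h⟩) <;> exact ⟨hj, by omega⟩
  have hd : Disjoint (J.filter (fun j : Fin n => (j : ℕ) < i))
      (J.filter (fun j : Fin n => j = (⟨i, hi⟩ : Fin n))) := by
    rw [Finset.disjoint_left]
    rintro j hj1 hj2
    simp only [Finset.mem_filter] at hj1 hj2
    rw [hj2.2] at hj1
    exact absurd hj1.2 (by simp)
  rw [cnt, h1, Finset.card_union_of_disjoint hd, Finset.filter_eq']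
  split_ifs <;> simp [cnt]

lemma cnt_of_forall {J : Finset (Fin n)} {i : ℕ} (h : ∀ j ∈ J, (j : ℕ) < i) :
    cnt J i = J.card := by
  rw [cnt, Finset.filter_true_of_mem h]

lemma eq_of_cnt {J₁ J₂ : Finset (Fin n)} (h1 : ∀ j ∈ J₁, (j : ℕ) + 1 < n)
    (h2 : ∀ j ∈ J₂, (j : ℕ) + 1 < n)
    (h : ∀ i ≤ n - 1, cnt J₁ i = cnt J₂ i) : J₁ = J₂ := by
  ext j
  by_cases hj : (j : ℕ) + 1 < n
  · have hlt : (j : ℕ) < n := j.isLt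
    have e1 := cnt_succ J₁ hlt
    have e2 := cnt_succ J₂ hlt
    have hj' : (⟨(j : ℕ), hlt⟩ : Fin n) = j := by ext; rfl
    rw [hj'] at e1 e2
    have ha := h (j : ℕ) (by omega)
    have hb := h ((j : ℕ) + 1) (by omega)
    rw [e1, e2, ha] at hb
    constructor
    · intro hmem
      by_contra hmem2
      simp [hmem, hmem2] at hb
    · intro hmem
      by_contra hmem2
      simp [hmem, hmem2] at hb
  · constructor
    · intro hmem; exact absurd (h1 j hmem) hj
    · intro hmem; exact absurd (h2 j hmem) hj

lemma d_KS (J : Finset (Fin n)) (i : ℕ) :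
    finrank ℂ ↥(KS n J ⊓ Emod n i) = cnt J i := by
  rw [Emod, KS_inf_KS]
  have : J ∩ (univ.filter fun j : Fin n => (j : ℕ) < i) = J.filter fun j : Fin n => (j : ℕ) < i := by
    ext j; simp [Finset.mem_filter, Finset.mem_inter]
  rw [this, finrank_KS]; rfl

lemma h_KS (J : Finset (Fin n)) (hn : 0 < n) (hL : LL n hn ∉ J) (i : ℕ) :
    finrank ℂ ↥(KS n J ⊓ Eh n i hn) = cnt J i := by
  rw [Eh, KS_inf_KS]
  have : J ∩ insert (LL n hn) (univ.filter fun j : Fin n => (j : ℕ) < i) =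
      J.filter fun j : Fin n => (j : ℕ) < i := by
    ext j
    simp only [Finset.mem_inter, Finset.mem_insert, Finset.mem_filter, Finset.mem_univ, true_and]
    constructor
    · rintro ⟨hj, (rfl | h)⟩
      · exact absurd hj hL
      · exact ⟨hj, h⟩
    · rintro ⟨hj, h⟩; exact ⟨hj, Or.inr h⟩
  rw [this, finrank_KS]; rfl

lemma d_KS_insert (J : Finset (Fin n)) (hn : 0 < n) (hL : LL n hn ∉ J) {i : ℕ}
    (hi : i ≤ n - 1) :
    finrank ℂ ↥(KS n (insert (LL n hn) J) ⊓ Emod n i) = cnt J i := by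
  rw [Emod, KS_inf_KS]
  have : insert (LL n hn) J ∩ (univ.filter fun j : Fin n => (j : ℕ) < i) =
      J.filter fun j : Fin n => (j : ℕ) < i := by
    ext j
    simp only [Finset.mem_inter, Finset.mem_insert, Finset.mem_filter, Finset.mem_univ, true_and]
    constructor
    · rintro ⟨(rfl | hj), h⟩
      · exact absurd h (by simp [LL]; omega)
      · exact ⟨hj, h⟩
    · rintro ⟨hj, h⟩; exact ⟨Or.inr hj, h⟩
  rw [this, finrank_KS]; rfl

lemma h_KS_insert (J : Finset (Fin n)) (hn : 0 < n) (hL : LL n hn ∉ J) {i : ℕ}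
    (hi : i ≤ n - 1) :
    finrank ℂ ↥(KS n (insert (LL n hn) J) ⊓ Eh n i hn) = cnt J i + 1 := by
  rw [Eh, KS_inf_KS]
  have : insert (LL n hn) J ∩ insert (LL n hn) (univ.filter fun j : Fin n => (j : ℕ) < i) =
      insert (LL n hn) (J.filter fun j : Fin n => (j : ℕ) < i) := by
    ext j
    simp only [Finset.mem_inter, Finset.mem_insert, Finset.mem_filter, Finset.mem_univ, true_and]
    constructor
    · rintro ⟨(rfl | hj), (h | h)⟩
      · exact Or.inl rfl
      · exact Or.inl rfl
      · exact Or.inl h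
      · exact Or.inr ⟨hj, h⟩
    · rintro (rfl | ⟨hj, h⟩)
      · exact ⟨Or.inl rfl, Or.inl rfl⟩
      · exact ⟨Or.inr hj, Or.inr h⟩
  rw [this, finrank_KS, Finset.card_insert_of_notMem (fun h => hL (Finset.mem_filter.mp h).1)]
  rfl

lemma cnt_erase {J : Finset (Fin n)} {j₀ : Fin n} {i : ℕ} (hij₀ : i ≤ (j₀ : ℕ)) :
    cnt (J.erase j₀) i = cnt J i := by
  unfold cnt
  congr 1
  ext j
  simp only [Finset.mem_filter, Finset.mem_erase]
  constructor
  · rintro ⟨⟨_, hj⟩, h⟩; exact ⟨hj, h⟩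
  · rintro ⟨hj, h⟩
    exact ⟨⟨fun he => by subst he; omega, hj⟩, h⟩

lemma d_HS (J : Finset (Fin n)) (j₀ : Fin n) (hn : 0 < n) (hj₀ : j₀ ∈ J)
    (hJ : ∀ j ∈ J, (j : ℕ) + 1 < n) {i : ℕ} (hi : i ≤ n - 1) :
    finrank ℂ ↥(HS n J j₀ hn ⊓ Emod n i) = cnt (J.erase j₀) i := by
  have hL : LL n hn ∉ J := fun h => by have := hJ _ h; simp [LL] at this; omega
  have key : HS n J j₀ hn ⊓ Emod n i = KS n ((J.erase j₀).filter fun j : Fin n => (j : ℕ) < i) := by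
    ext x
    simp only [Submodule.mem_inf, mem_HS, mem_Emod, mem_KS]
    constructor
    · rintro ⟨⟨hsupp, heq⟩, hE⟩ j hj
      by_cases hjL : j = LL n hn
      · subst hjL; exact hE _ (by simp [LL]; omega)
      · by_cases hij : i ≤ (j : ℕ)
        · exact hE j hij
        · rw [Finset.mem_filter, not_and_or] at hj
          rcases hj with hj | hj
          · rw [Finset.mem_erase, not_and_or] at hj
            rcases hj with hj | hj
            · push_neg at hj
              subst hj
              rw [← heq]
              exact hE _ (by simp [LL]; omega)
            · exact hsupp j (by simp [hjL, hj])
          · omega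
    · intro hK
      have hj₀0 : x j₀ = 0 :=
        hK j₀ (fun h => by simp [Finset.mem_filter, Finset.mem_erase] at h)
      have hL0 : x (LL n hn) = 0 :=
        hK _ (fun h => by
          simp only [Finset.mem_filter, Finset.mem_erase] at h
          exact absurd h.1.2 hL)
      refine ⟨⟨fun j hj => ?_, by rw [hL0, hj₀0]⟩, fun j hij => ?_⟩
      · simp only [Finset.mem_insert, not_or] at hj
        refine hK j (fun h => ?_)
        simp only [Finset.mem_filter, Finset.mem_erase] at h
        exact hj.2 h.1.2
      · refine hK j (fun h => ?_)
        simp only [Finset.mem_filter] at h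
        omega
  rw [key, finrank_KS]; rfl

lemma h_HS (J : Finset (Fin n)) (j₀ : Fin n) (hn : 0 < n) (hj₀ : j₀ ∈ J)
    (hJ : ∀ j ∈ J, (j : ℕ) + 1 < n) {i : ℕ} (hi : i ≤ n - 1) :
    finrank ℂ ↥(HS n J j₀ hn ⊓ Eh n i hn) = cnt J i := by
  have hL : LL n hn ∉ J := fun h => by have := hJ _ h; simp [LL] at this; omega
  have hj₀L : j₀ ≠ LL n hn := fun h => hL (h ▸ hj₀)
  by_cases hij₀ : i ≤ (j₀ : ℕ)
  · -- j₀ not yet cut in: reduces to a coordinate subspace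
    have key : HS n J j₀ hn ⊓ Eh n i hn =
        KS n ((J.erase j₀).filter fun j : Fin n => (j : ℕ) < i) := by
      ext x
      simp only [Submodule.mem_inf, mem_HS, mem_Eh, mem_KS]
      constructor
      · rintro ⟨⟨hsupp, heq⟩, hE⟩ j hj
        have hj₀0 : x j₀ = 0 := hE j₀ hij₀ hj₀L
        by_cases hjL : j = LL n hn
        · subst hjL; rw [heq, hj₀0]
        · by_cases hij : i ≤ (j : ℕ)
          · exact hE j hij hjL
          · rw [Finset.mem_filter, not_and_or] at hj
            rcases hj with hj | hj
            · rw [Finset.mem_erase, not_and_or] at hj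
              rcases hj with hj | hj
              · push_neg at hj; subst hj; exact hj₀0
              · exact hsupp j (by simp [hjL, hj])
            · omega
      · intro hK
        have hj₀0 : x j₀ = 0 :=
          hK j₀ (fun h => by simp [Finset.mem_filter, Finset.mem_erase] at h)
        have hL0 : x (LL n hn) = 0 :=
          hK _ (fun h => by
            simp only [Finset.mem_filter, Finset.mem_erase] at h
            exact absurd h.1.2 hL)
        refine ⟨⟨fun j hj => ?_, by rw [hL0, hj₀0]⟩, fun j hij hjL => ?_⟩
        · simp only [Finset.mem_insert, not_or] at hj
          refine hK j (fun h => ?_)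
          simp only [Finset.mem_filter, Finset.mem_erase] at h
          exact hj.2 h.1.2
        · refine hK j (fun h => ?_)
          simp only [Finset.mem_filter] at h
          omega
    rw [key, finrank_KS, ← cnt_erase hij₀]; rfl
  · -- j₀ < i : reduces to a smaller hat subspace
    push_neg at hij₀
    have key : HS n J j₀ hn ⊓ Eh n i hn =
        HS n (J.filter fun j : Fin n => (j : ℕ) < i) j₀ hn := by
      ext x
      simp only [Submodule.mem_inf, mem_HS, mem_Eh]
      constructor
      · rintro ⟨⟨hsupp, heq⟩, hE⟩
        refine ⟨fun j hj => ?_, heq⟩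
        simp only [Finset.mem_insert, Finset.mem_filter, not_or, not_and_or] at hj
        rcases hj.2 with hj2 | hj2
        · exact hsupp j (by simp [hj.1, hj2])
        · exact hE j (by omega) hj.1
      · rintro ⟨hsupp, heq⟩
        refine ⟨⟨fun j hj => hsupp j ?_, heq⟩, fun j hij hjL => hsupp j ?_⟩
        · simp only [Finset.mem_insert, not_or] at hj ⊢
          simp only [Finset.mem_filter, not_and_or]
          exact ⟨hj.1, Or.inl hj.2⟩
        · simp only [Finset.mem_insert, not_or, Finset.mem_filter, not_and_or]
          exact ⟨hjL, Or.inr (by omega)⟩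
    rw [key, finrank_HS _ _ _ (Finset.mem_filter.mpr ⟨hj₀, hij₀⟩)
      (fun h => hL (Finset.mem_filter.mp h).1)]
    rfl


lemma toLin'_inj {g : Matrix (Fin n) (Fin n) ℂ} (hg : IsUnit g) :
    Function.Injective (Matrix.toLin' g) := by
  obtain ⟨u, rfl⟩ := hg
  have h : ∀ x, Matrix.toLin' (↑u⁻¹ : Matrix (Fin n) (Fin n) ℂ) (Matrix.toLin' (↑u) x) = x := by
    intro x
    rw [← Matrix.toLin'_mul_apply, Units.inv_mul]
    simp
  exact Function.LeftInverse.injective h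

lemma finrank_map_toLin' {g : Matrix (Fin n) (Fin n) ℂ} (hg : IsUnit g)
    (p : Submodule ℂ (Fin n → ℂ)) :
    finrank ℂ ↥(p.map (Matrix.toLin' g)) = finrank ℂ ↥p :=
  ((Submodule.equivMapOfInjective _ (toLin'_inj hg) p).finrank_eq).symm

lemma toLin'_apply_mem_Emod {g : Matrix (Fin n) (Fin n) ℂ}
    (hg2 : ∀ i j : Fin n, (j : ℕ) < (i : ℕ) → g i j = 0)
    {i : ℕ} {x : Fin n → ℂ} (hx : x ∈ Emod n i) : Matrix.toLin' g x ∈ Emod n i := by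
  rw [mem_Emod] at hx ⊢
  intro j hj
  rw [Matrix.toLin'_apply, Matrix.mulVec, dotProduct]
  refine Finset.sum_eq_zero fun k _ => ?_
  by_cases h : (k : ℕ) < (j : ℕ)
  · rw [hg2 j k h, zero_mul]
  · rw [hx k (by omega), mul_zero]

lemma map_Emod {g : Matrix (Fin n) (Fin n) ℂ} (hg : memB n g) (i : ℕ) :
    (Emod n i).map (Matrix.toLin' g) = Emod n i := by
  apply Submodule.eq_of_le_of_finrank_eq
  · rintro _ ⟨x, hx, rfl⟩
    exact toLin'_apply_mem_Emod hg.2.1 hx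
  · rw [finrank_map_toLin' hg.1]

lemma map_Eh {g : Matrix (Fin n) (Fin n) ℂ} (hg : memB n g) (i : ℕ) (hn : 0 < n) :
    (Eh n i hn).map (Matrix.toLin' g) = Eh n i hn := by
  apply Submodule.eq_of_le_of_finrank_eq
  · rintro _ ⟨x, hx, rfl⟩
    rw [SetLike.mem_coe] at hx
    rw [mem_Eh] at hx ⊢
    intro j hj hjL
    rw [Matrix.toLin'_apply, Matrix.mulVec, dotProduct]
    refine Finset.sum_eq_zero fun k _ => ?_
    by_cases hkL : k = LL n hn
    · subst hkL
      rw [hg.2.2.2 j _ (by simp [LL]; omega) (by simp [Fin.ext_iff, LL] at hjL ⊢; omega),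
        zero_mul]
    · by_cases h : (k : ℕ) < (j : ℕ)
      · rw [hg.2.1 j k h, zero_mul]
      · rw [hx k (by omega) hkL, mul_zero]
  · rw [finrank_map_toLin' hg.1]

lemma inv_d {g : Matrix (Fin n) (Fin n) ℂ} (hg : memB n g)
    (p : Submodule ℂ (Fin n → ℂ)) (i : ℕ) :
    finrank ℂ ↥(p.map (Matrix.toLin' g) ⊓ Emod n i) = finrank ℂ ↥(p ⊓ Emod n i) := by
  conv_lhs => rw [← map_Emod hg i]
  rw [← Submodule.map_inf _ (toLin'_inj hg.1), finrank_map_toLin' hg.1]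

lemma inv_h {g : Matrix (Fin n) (Fin n) ℂ} (hg : memB n g)
    (p : Submodule ℂ (Fin n → ℂ)) (i : ℕ) (hn : 0 < n) :
    finrank ℂ ↥(p.map (Matrix.toLin' g) ⊓ Eh n i hn) = finrank ℂ ↥(p ⊓ Eh n i hn) := by
  conv_lhs => rw [← map_Eh hg i hn]
  rw [← Submodule.map_inf _ (toLin'_inj hg.1), finrank_map_toLin' hg.1]


lemma LL_not_mem {J : Finset (Fin n)} (hn : 0 < n) (hJ : ∀ j ∈ J, (j : ℕ) + 1 < n) :
    LL n hn ∉ J := fun h => by have := hJ _ h; simp only [LL] at this; omega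

lemma erase_inj_of_mem {J : Finset (Fin n)} {a b : Fin n} (ha : a ∈ J) (_hb : b ∈ J)
    (h : J.erase a = J.erase b) : a = b := by
  by_contra hne
  have h1 : a ∈ J.erase b := Finset.mem_erase.mpr ⟨hne, ha⟩
  rw [← h] at h1
  exact (Finset.mem_erase.mp h1).1 rfl

lemma cnt_pred_eq_card {J : Finset (Fin n)} (hJ : ∀ j ∈ J, (j : ℕ) + 1 < n) :
    cnt J (n - 1) = J.card :=
  cnt_of_forall fun j hj => by have := hJ j hj; omega

lemma rep_cases {k : ℕ} (hn2 : 2 ≤ n) {R : Submodule ℂ (Fin n → ℂ)}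
    (hR : R ∈ repSet n k (Nat.le_of_succ_le hn2)) :
    (∃ J : Finset (Fin n), (∀ j ∈ J, (j : ℕ) + 1 < n) ∧ J.card = k ∧ R = KS n J) ∨
    (∃ J : Finset (Fin n), (∀ j ∈ J, (j : ℕ) + 1 < n) ∧ J.card + 1 = k ∧
      R = KS n (insert (LL n (by omega)) J)) ∨
    (∃ (J : Finset (Fin n)) (j₀ : Fin n), j₀ ∈ J ∧ (∀ j ∈ J, (j : ℕ) + 1 < n) ∧
      J.card = k ∧ R = HS n J j₀ (by omega)) := by
  have hn : 0 < n := by omega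
  simp only [repSet, Set.mem_union, Set.mem_setOf_eq] at hR
  rcases hR with (⟨J, hJ, hc, hRe⟩ | ⟨J, hJ, hc, hRe⟩) | ⟨J, j₀, hj₀, hJ, hc, hRe⟩
  · exact Or.inl ⟨J, hJ, hc, by rw [hRe, span_stdVec]⟩
  · exact Or.inr (Or.inl ⟨J, hJ, hc, by
      rw [hRe, ← Set.image_insert_eq, ← Finset.coe_insert, span_stdVec]
      rfl⟩)
  · exact Or.inr (Or.inr ⟨J, j₀, hj₀, hJ, hc, by
      rw [hRe, span_hat J j₀ hn hj₀ (LL_not_mem hn hJ)]⟩)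

lemma rep_eq_of_inv {k : ℕ} (hn2 : 2 ≤ n) (hk1 : 1 ≤ k) {R₁ R₂ : Submodule ℂ (Fin n → ℂ)}
    (hR₁ : R₁ ∈ repSet n k (Nat.le_of_succ_le hn2)) (hR₂ : R₂ ∈ repSet n k (Nat.le_of_succ_le hn2))
    (hd : ∀ i, i ≤ n - 1 → finrank ℂ ↥(R₁ ⊓ Emod n i) = finrank ℂ ↥(R₂ ⊓ Emod n i))
    (hh : ∀ i, i ≤ n - 1 →
      finrank ℂ ↥(R₁ ⊓ Eh n i (by omega)) = finrank ℂ ↥(R₂ ⊓ Eh n i (by omega))) :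
    R₁ = R₂ := by
  have hn : 0 < n := by omega
  have hpred : n - 1 ≤ n - 1 := le_rfl
  have h0 : (0 : ℕ) ≤ n - 1 := by omega
  rcases rep_cases hn2 hR₁ with ⟨J₁, hJ₁, hc₁, rfl⟩ | ⟨J₁, hJ₁, hc₁, rfl⟩ |
      ⟨J₁, j₁, hj₁, hJ₁, hc₁, rfl⟩ <;>
    rcases rep_cases hn2 hR₂ with ⟨J₂, hJ₂, hc₂, rfl⟩ | ⟨J₂, hJ₂, hc₂, rfl⟩ |
      ⟨J₂, j₂, hj₂, hJ₂, hc₂, rfl⟩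
  · -- 1-1
    refine congrArg _ (eq_of_cnt hJ₁ hJ₂ fun i hi => ?_)
    have h := hd i hi
    rwa [d_KS, d_KS] at h
  · -- 1-2
    exfalso
    have h := hd (n - 1) hpred
    rw [d_KS, d_KS_insert J₂ hn (LL_not_mem hn hJ₂) hpred, cnt_pred_eq_card hJ₁,
      cnt_pred_eq_card hJ₂] at h
    omega
  · -- 1-3
    exfalso
    have h := hd (n - 1) hpred
    rw [d_KS, d_HS J₂ j₂ hn hj₂ hJ₂ hpred, cnt_pred_eq_card hJ₁,
      cnt_pred_eq_card (fun j hj => hJ₂ j (Finset.mem_of_mem_erase hj)),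
      Finset.card_erase_of_mem hj₂] at h
    omega
  · -- 2-1
    exfalso
    have h := hd (n - 1) hpred
    rw [d_KS_insert J₁ hn (LL_not_mem hn hJ₁) hpred, d_KS, cnt_pred_eq_card hJ₁,
      cnt_pred_eq_card hJ₂] at h
    omega
  · -- 2-2
    refine congrArg _ (congrArg _ (eq_of_cnt hJ₁ hJ₂ fun i hi => ?_))
    have h := hd i hi
    rwa [d_KS_insert J₁ hn (LL_not_mem hn hJ₁) hi, d_KS_insert J₂ hn (LL_not_mem hn hJ₂) hi] at h
  · -- 2-3
    exfalso
    have h := hh 0 h0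
    rw [h_KS_insert J₁ hn (LL_not_mem hn hJ₁) h0, h_HS J₂ j₂ hn hj₂ hJ₂ h0,
      cnt_zero, cnt_zero] at h
    omega
  · -- 3-1
    exfalso
    have h := hd (n - 1) hpred
    rw [d_HS J₁ j₁ hn hj₁ hJ₁ hpred, d_KS, cnt_pred_eq_card hJ₂,
      cnt_pred_eq_card (fun j hj => hJ₁ j (Finset.mem_of_mem_erase hj)),
      Finset.card_erase_of_mem hj₁] at h
    omega
  · -- 3-2
    exfalso
    have h := hh 0 h0
    rw [h_KS_insert J₂ hn (LL_not_mem hn hJ₂) h0, h_HS J₁ j₁ hn hj₁ hJ₁ h0,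
      cnt_zero, cnt_zero] at h
    omega
  · -- 3-3
    have eJ : J₁ = J₂ := eq_of_cnt hJ₁ hJ₂ fun i hi => by
      have h := hh i hi
      rwa [h_HS J₁ j₁ hn hj₁ hJ₁ hi, h_HS J₂ j₂ hn hj₂ hJ₂ hi] at h
    have eE : J₁.erase j₁ = J₂.erase j₂ :=
      eq_of_cnt (fun j hj => hJ₁ j (Finset.mem_of_mem_erase hj))
        (fun j hj => hJ₂ j (Finset.mem_of_mem_erase hj)) fun i hi => by
      have h := hd i hi
      rwa [d_HS J₁ j₁ hn hj₁ hJ₁ hi, d_HS J₂ j₂ hn hj₂ hJ₂ hi] at h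
    subst eJ
    rw [erase_inj_of_mem hj₁ hj₂ eE]

/-! ### Jump sets and echelon vectors -/

instance : FiniteDimensional ℂ (Fin n → ℂ) := by infer_instance

def dd (U : Submodule ℂ (Fin n → ℂ)) (i : ℕ) : ℕ := finrank ℂ ↥(U ⊓ Emod n i)

lemma dd_mono (U : Submodule ℂ (Fin n → ℂ)) {i i' : ℕ} (h : i ≤ i') : dd U i ≤ dd U i' := by
  apply Submodule.finrank_mono
  apply inf_le_inf_left
  intro x hx
  simp only [SetLike.mem_coe, mem_Emod] at hx ⊢
  exact fun j hj => hx j (by omega)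

lemma dd_zero (U : Submodule ℂ (Fin n → ℂ)) : dd U 0 = 0 := by
  have : U ⊓ Emod n 0 = ⊥ := by
    rw [eq_bot_iff]
    rintro x ⟨_, hx⟩
    rw [SetLike.mem_coe, mem_Emod] at hx
    have : x = 0 := funext fun j => hx j (Nat.zero_le _)
    simp [this]
  rw [dd, this, finrank_bot]

lemma dd_top (U : Submodule ℂ (Fin n → ℂ)) : dd U n = finrank ℂ U := by
  rw [dd, Emod_of_le le_rfl, inf_top_eq]

lemma dd_succ_le (U : Submodule ℂ (Fin n → ℂ)) (i : ℕ) : dd U (i + 1) ≤ dd U i + 1 := by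
  by_cases hi : i < n
  · set N := U ⊓ Emod n (i + 1) with hN
    set M := U ⊓ Emod n i with hM
    have hMN : M ≤ N := inf_le_inf_left U (by
      intro x hx
      simp only [SetLike.mem_coe, mem_Emod] at hx ⊢
      exact fun j hj => hx j (by omega))
    set φ : ↥N →ₗ[ℂ] ℂ := (LinearMap.proj (⟨i, hi⟩ : Fin n)).comp N.subtype with hφ
    have hker : LinearMap.ker φ = LinearMap.range (Submodule.inclusion hMN) := by
      ext x
      rw [LinearMap.mem_ker, Submodule.range_inclusion]
      simp only [hφ, LinearMap.coe_comp, Function.comp_apply, LinearMap.proj_apply,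
        Submodule.coe_subtype, Submodule.mem_comap, Submodule.coe_subtype]
      constructor
      · intro hx0
        refine ⟨x.2.1, ?_⟩
        simp only [SetLike.mem_coe, mem_Emod]
        intro j hj
        by_cases hji : (j : ℕ) = i
        · have : j = (⟨i, hi⟩ : Fin n) := Fin.ext hji
          rwa [this]
        · exact (mem_Emod.mp x.2.2) j (by omega)
      · intro hx
        exact (mem_Emod.mp hx.2) _ (le_refl i)
    have h1 : finrank ℂ (LinearMap.range φ) + finrank ℂ (LinearMap.ker φ) = finrank ℂ ↥N :=
      LinearMap.finrank_range_add_finrank_ker φ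
    have h2 : finrank ℂ (LinearMap.ker φ) = finrank ℂ ↥M := by
      rw [hker, LinearMap.finrank_range_of_inj (Submodule.inclusion_injective hMN)]
    have h3 : finrank ℂ (LinearMap.range φ) ≤ 1 := by
      have := Submodule.finrank_le (LinearMap.range φ)
      simpa using this
    calc dd U (i + 1) = finrank ℂ ↥N := rfl
      _ = finrank ℂ (LinearMap.range φ) + finrank ℂ ↥M := by rw [← h1, h2]
      _ ≤ dd U i + 1 := by
          have h4 : finrank ℂ ↥M = dd U i := rfl
          omega
  · have : Emod n (i + 1) = Emod n i := by
      rw [Emod_of_le (by omega), Emod_of_le (by omega)]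
    rw [dd, this]
    exact Nat.le_succ _

open scoped Classical in
def JF (U : Submodule ℂ (Fin n → ℂ)) : Finset (Fin n) :=
  univ.filter fun j : Fin n => dd U ((j : ℕ) + 1) ≠ dd U (j : ℕ)

lemma mem_JF {U : Submodule ℂ (Fin n → ℂ)} {j : Fin n} :
    j ∈ JF U ↔ dd U ((j : ℕ) + 1) ≠ dd U (j : ℕ) := by
  simp [JF]

lemma dd_eq_cnt (U : Submodule ℂ (Fin n → ℂ)) : ∀ i, i ≤ n → dd U i = cnt (JF U) i := by
  intro i
  induction i with
  | zero => intro _; rw [dd_zero, cnt_zero]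
  | succ m ih =>
    intro hm
    have hmn : m < n := by omega
    have ihm := ih (by omega)
    rw [cnt_succ _ hmn, ← ihm]
    have hmem : (⟨m, hmn⟩ : Fin n) ∈ JF U ↔ dd U (m + 1) ≠ dd U m := mem_JF
    have h1 := dd_mono U (by omega : m ≤ m + 1)
    have h2 := dd_succ_le U m
    by_cases h : dd U (m + 1) = dd U m
    · rw [if_neg (fun hc => (hmem.mp hc) h)]
      omega
    · rw [if_pos (hmem.mpr h)]
      omega

lemma card_JF (U : Submodule ℂ (Fin n → ℂ)) : (JF U).card = finrank ℂ U := by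
  have := dd_eq_cnt U n le_rfl
  rw [dd_top] at this
  rw [this, cnt_of_forall fun j _ => j.isLt]

lemma JF_subset {U : Submodule ℂ (Fin n → ℂ)} (hn : 0 < n) (hU : U ≤ Emod n (n - 1)) :
    ∀ j ∈ JF U, (j : ℕ) + 1 < n := by
  intro j hj
  rw [mem_JF] at hj
  by_contra hc
  have hj1 : (j : ℕ) = n - 1 := by have := j.isLt; omega
  have he : U ⊓ Emod n (n - 1) = U ⊓ Emod n n := by
    rw [inf_eq_left.mpr hU, inf_eq_left.mpr (hU.trans (by
      intro x hx
      simp only [SetLike.mem_coe, mem_Emod] at hx ⊢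
      exact fun j hj => hx j (by omega)))]
  have : dd U (n - 1) = dd U n := by rw [dd, dd, he]
  rw [hj1] at hj
  have hn1 : (n - 1) + 1 = n := by omega
  rw [hn1] at hj
  exact hj this.symm

lemma echelon {U : Submodule ℂ (Fin n → ℂ)} {j : Fin n} (hj : j ∈ JF U) :
    ∃ w : Fin n → ℂ, w ∈ U ∧ w ∈ Emod n ((j : ℕ) + 1) ∧ w j ≠ 0 ∧ w ∉ Emod n (j : ℕ) := by
  rw [mem_JF] at hj
  have hle : U ⊓ Emod n (j : ℕ) ≤ U ⊓ Emod n ((j : ℕ) + 1) :=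
    inf_le_inf_left U (by
      intro x hx
      simp only [SetLike.mem_coe, mem_Emod] at hx ⊢
      exact fun j' hj' => hx j' (by omega))
  have hlt : U ⊓ Emod n (j : ℕ) < U ⊓ Emod n ((j : ℕ) + 1) := by
    rcases lt_or_eq_of_le hle with h | h
    · exact h
    · exact absurd (by rw [dd, dd, h]) hj
  obtain ⟨w, hw1, hw2⟩ := SetLike.exists_of_lt hlt
  obtain ⟨hwU, hwE⟩ := hw1
  have hwE' : w ∉ Emod n (j : ℕ) := fun h => hw2 ⟨hwU, h⟩
  refine ⟨w, hwU, hwE, ?_, hwE'⟩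
  intro h0
  apply hwE'
  rw [mem_Emod]
  intro j' hj'
  by_cases hjj : (j' : ℕ) = (j : ℕ)
  · have : j' = j := Fin.ext hjj
    rwa [this]
  · exact (mem_Emod.mp hwE) j' (by omega)

/-! ### Building matrices from columns -/

def colMat (c : Fin n → (Fin n → ℂ)) : Matrix (Fin n) (Fin n) ℂ := fun i j => c j i

lemma toLin'_colMat (c : Fin n → (Fin n → ℂ)) (j : Fin n) :
    Matrix.toLin' (colMat c) (Pi.single j 1) = c j := by
  funext i
  rw [Matrix.toLin'_apply, Matrix.mulVec_single]
  simp [colMat]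

lemma memB_colMat (hn : 0 < n) (c : Fin n → (Fin n → ℂ))
    (h1 : ∀ j : Fin n, c j ∈ Emod n ((j : ℕ) + 1))
    (h2 : ∀ j, c j j ≠ 0)
    (h3 : c (LL n hn) = stdVec n (LL n hn)) :
    memB n (colMat c) := by
  have htri : ∀ i j : Fin n, (j : ℕ) < (i : ℕ) → colMat c i j = 0 := by
    intro i j hij
    exact (mem_Emod.mp (h1 j)) i (by omega)
  refine ⟨?_, htri, ?_, ?_⟩
  · rw [Matrix.isUnit_iff_isUnit_det]
    have hdet : (colMat c).det = ∏ i, colMat c i i :=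
      Matrix.det_of_upperTriangular (by intro i j hij; exact htri i j hij)
    rw [hdet]
    rw [isUnit_iff_ne_zero]
    rw [Finset.prod_ne_zero_iff]
    intro i _
    exact h2 i
  · intro i hi
    have : i = LL n hn := Fin.ext (by simp [LL]; omega)
    rw [this]
    show c (LL n hn) (LL n hn) = 1
    rw [h3, stdVec, Pi.single_eq_same]
  · intro i j hj hi
    have hjL : j = LL n hn := Fin.ext (by simp [LL]; omega)
    have hiL : i ≠ LL n hn := fun h => hi (by rw [h]; simp [LL]; omega)
    subst hjL
    show c (LL n hn) i = 0
    rw [h3, stdVec]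
    exact Pi.single_eq_of_ne hiL 1

lemma Emod_mono {i i' : ℕ} (h : i ≤ i') : Emod n i ≤ Emod n i' := by
  intro x hx
  simp only [SetLike.mem_coe, mem_Emod] at hx ⊢
  exact fun j hj => hx j (by omega)

lemma stdVec_mem_Emod (j : Fin n) : stdVec n j ∈ Emod n ((j : ℕ) + 1) :=
  mem_Emod.mpr fun j' hj' => Pi.single_eq_of_ne (fun h : j' = j => by subst h; omega) 1

lemma map_eq_of {g : Matrix (Fin n) (Fin n) ℂ} (hg : IsUnit g) (s : Set (Fin n → ℂ))
    (W : Submodule ℂ (Fin n → ℂ)) (him : ∀ x ∈ s, Matrix.toLin' g x ∈ W)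
    (hrank : finrank ℂ ↥(Submodule.span ℂ s) = finrank ℂ ↥W) :
    (Submodule.span ℂ s).map (Matrix.toLin' g) = W := by
  apply Submodule.eq_of_le_of_finrank_eq
  · rw [Submodule.map_span, Submodule.span_le]
    rintro _ ⟨x, hx, rfl⟩
    exact him x hx
  · rw [finrank_map_toLin' hg, hrank]

lemma mem_Emod_pred (hn : 0 < n) {x : Fin n → ℂ} :
    x ∈ Emod n (n - 1) ↔ x (LL n hn) = 0 := by
  constructor
  · intro h
    exact (mem_Emod.mp h) _ (by simp [LL])
  · intro h
    rw [mem_Emod]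
    intro j hj
    have : j = LL n hn := Fin.ext (by simp [LL]; have := j.isLt; omega)
    rwa [this]

lemma finrank_inf_pred (hn : 0 < n) {W : Submodule ℂ (Fin n → ℂ)} {v : Fin n → ℂ}
    (hv : v ∈ W) (hvL : v (LL n hn) ≠ 0) :
    finrank ℂ ↥(W ⊓ Emod n (n - 1)) + 1 = finrank ℂ ↥W := by
  set φ : ↥W →ₗ[ℂ] ℂ := (LinearMap.proj (LL n hn)).comp W.subtype with hφ
  have hle : W ⊓ Emod n (n - 1) ≤ W := inf_le_left
  have hker : LinearMap.ker φ = LinearMap.range (Submodule.inclusion hle) := by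
    ext x
    rw [LinearMap.mem_ker, Submodule.range_inclusion]
    simp only [hφ, LinearMap.coe_comp, Function.comp_apply, LinearMap.proj_apply,
      Submodule.coe_subtype, Submodule.mem_comap]
    constructor
    · intro hx0
      exact ⟨x.2, (mem_Emod_pred hn).mpr hx0⟩
    · intro hx
      exact (mem_Emod_pred hn).mp hx.2
  have hrange : LinearMap.range φ = ⊤ := by
    rw [LinearMap.range_eq_top]
    intro a
    refine ⟨⟨(a / v (LL n hn)) • v, W.smul_mem _ hv⟩, ?_⟩
    simp only [hφ, LinearMap.coe_comp, Function.comp_apply, LinearMap.proj_apply,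
      Submodule.coe_subtype, Pi.smul_apply, smul_eq_mul]
    field_simp
  have h1 : finrank ℂ (LinearMap.range φ) + finrank ℂ (LinearMap.ker φ) = finrank ℂ ↥W :=
    LinearMap.finrank_range_add_finrank_ker φ
  have h2 : finrank ℂ (LinearMap.ker φ) = finrank ℂ ↥(W ⊓ Emod n (n - 1)) := by
    rw [hker, LinearMap.finrank_range_of_inj (Submodule.inclusion_injective hle)]
  have h3 : finrank ℂ (LinearMap.range φ) = 1 := by
    rw [hrange, finrank_top, finrank_self]
  omega

/-- Choice of echelon columns adapted to a subspace `U`. -/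
lemma exists_cols (U : Submodule ℂ (Fin n → ℂ)) :
    ∃ w : Fin n → (Fin n → ℂ), ∀ j : Fin n, j ∈ JF U →
      (w j ∈ U ∧ w j ∈ Emod n ((j : ℕ) + 1) ∧ w j j ≠ 0) := by
  have hech : ∀ j : Fin n, ∃ wv : Fin n → ℂ, j ∈ JF U →
      (wv ∈ U ∧ wv ∈ Emod n ((j : ℕ) + 1) ∧ wv j ≠ 0) := by
    intro j
    by_cases h : j ∈ JF U
    · obtain ⟨wv, h1, h2, h3, _⟩ := echelon h
      exact ⟨wv, fun _ => ⟨h1, h2, h3⟩⟩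
    · exact ⟨0, fun hc => absurd hc h⟩
  choose w hw using hech
  exact ⟨w, hw⟩

lemma exists_g_case1 {k : ℕ} (hn2 : 2 ≤ n) (W : Submodule ℂ (Fin n → ℂ))
    (hW : finrank ℂ ↥W = k) (hWE : W ≤ Emod n (n - 1)) :
    ∃ R ∈ repSet n k (Nat.le_of_succ_le hn2), ∃ g, memB n g ∧ R.map (Matrix.toLin' g) = W := by
  classical
  have hn : 0 < n := by omega
  have hJs := JF_subset hn hWE
  obtain ⟨w, hw⟩ := exists_cols W
  set c : Fin n → (Fin n → ℂ) := fun j => if j ∈ JF W then w j else stdVec n j with hc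
  have hLJ : LL n hn ∉ JF W := fun h => by have := hJs _ h; simp [LL] at this; omega
  have hc1 : ∀ j : Fin n, c j ∈ Emod n ((j : ℕ) + 1) := by
    intro j
    by_cases h : j ∈ JF W
    · simpa [hc, h] using (hw j h).2.1
    · simpa [hc, h] using stdVec_mem_Emod j
  have hc2 : ∀ j : Fin n, c j j ≠ 0 := by
    intro j
    by_cases h : j ∈ JF W
    · simpa [hc, h] using (hw j h).2.2
    · simp [hc, h, stdVec]
  have hc3 : c (LL n hn) = stdVec n (LL n hn) := by simp [hc, hLJ]
  refine ⟨Submodule.span ℂ (stdVec n '' ↑(JF W)), Or.inl (Or.inl ⟨JF W, hJs, ?_, rfl⟩),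
    colMat c, memB_colMat hn c hc1 hc2 hc3, ?_⟩
  · rw [card_JF, hW]
  · apply map_eq_of (memB_colMat hn c hc1 hc2 hc3).1
    · rintro _ ⟨j, hj, rfl⟩
      rw [stdVec, toLin'_colMat]
      have hjJ : j ∈ JF W := by exact_mod_cast hj
      simp only [hc, if_pos hjJ]
      exact (hw j hjJ).1
    · rw [span_stdVec, finrank_KS, card_JF, hW]

lemma exists_g_case2 {k : ℕ} (hn2 : 2 ≤ n) (hk1 : 1 ≤ k) (W : Submodule ℂ (Fin n → ℂ))
    (hW : finrank ℂ ↥W = k) (heL : stdVec n (LL n (by omega)) ∈ W) :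
    ∃ R ∈ repSet n k (Nat.le_of_succ_le hn2), ∃ g, memB n g ∧ R.map (Matrix.toLin' g) = W := by
  classical
  have hn : 0 < n := by omega
  set U : Submodule ℂ (Fin n → ℂ) := W ⊓ Emod n (n - 1) with hUdef
  have hU : finrank ℂ ↥U + 1 = k := by
    rw [hUdef, finrank_inf_pred hn heL (by simp [stdVec]), hW]
  have hJs := JF_subset hn (inf_le_right : U ≤ Emod n (n - 1))
  obtain ⟨w, hw⟩ := exists_cols U
  set c : Fin n → (Fin n → ℂ) := fun j => if j ∈ JF U then w j else stdVec n j with hc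
  have hLJ : LL n hn ∉ JF U := fun h => by have := hJs _ h; simp [LL] at this; omega
  have hc1 : ∀ j : Fin n, c j ∈ Emod n ((j : ℕ) + 1) := by
    intro j
    by_cases h : j ∈ JF U
    · simpa [hc, h] using (hw j h).2.1
    · simpa [hc, h] using stdVec_mem_Emod j
  have hc2 : ∀ j : Fin n, c j j ≠ 0 := by
    intro j
    by_cases h : j ∈ JF U
    · simpa [hc, h] using (hw j h).2.2
    · simp [hc, h, stdVec]
  have hc3 : c (LL n hn) = stdVec n (LL n hn) := by simp [hc, hLJ]
  refine ⟨Submodule.span ℂ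
      (insert (stdVec n (⟨n - 1, by omega⟩ : Fin n)) (stdVec n '' ↑(JF U))),
    Or.inl (Or.inr ⟨JF U, hJs, ?_, rfl⟩),
    colMat c, memB_colMat hn c hc1 hc2 hc3, ?_⟩
  · rw [card_JF]; exact hU
  · apply map_eq_of (memB_colMat hn c hc1 hc2 hc3).1
    · rintro x hx
      rcases Set.mem_insert_iff.mp hx with rfl | ⟨j, hj, rfl⟩
      · show Matrix.toLin' (colMat c) (stdVec n (⟨n - 1, by omega⟩ : Fin n)) ∈ W
        rw [stdVec, toLin'_colMat]
        exact (show c (LL n hn) ∈ W from hc3 ▸ heL)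
      · rw [stdVec, toLin'_colMat]
        have hjJ : j ∈ JF U := by exact_mod_cast hj
        simp only [hc, if_pos hjJ]
        exact ((hw j hjJ).1 : w j ∈ U).1
    · rw [← Set.image_insert_eq, ← Finset.coe_insert, span_stdVec, finrank_KS]
      show #(insert (LL n hn) (JF U)) = finrank ℂ ↥W
      rw [Finset.card_insert_of_notMem hLJ, card_JF, hW]
      exact hU

lemma exists_g_case3 {k : ℕ} (hn2 : 2 ≤ n) (hk1 : 1 ≤ k) (W : Submodule ℂ (Fin n → ℂ))
    (hW : finrank ℂ ↥W = k) (hnot1 : ¬ W ≤ Emod n (n - 1))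
    (hnot2 : stdVec n (LL n (by omega)) ∉ W) :
    ∃ R ∈ repSet n k (Nat.le_of_succ_le hn2), ∃ g, memB n g ∧ R.map (Matrix.toLin' g) = W := by
  classical
  have hn : 0 < n := by omega
  -- a vector with last coordinate 1
  obtain ⟨x, hxW, hxE⟩ := SetLike.not_le_iff_exists.mp hnot1
  have hxL : x (LL n hn) ≠ 0 := fun h => hxE ((mem_Emod_pred hn).mpr h)
  set v : Fin n → ℂ := (x (LL n hn))⁻¹ • x with hv
  have hvW : v ∈ W := W.smul_mem _ hxW
  have hvL : v (LL n hn) = 1 := by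
    rw [hv]; simp only [Pi.smul_apply, smul_eq_mul]; field_simp
  set u : Fin n → ℂ := v - stdVec n (LL n hn) with hu
  have huE : u ∈ Emod n (n - 1) := (mem_Emod_pred hn).mpr (by
    rw [hu]; simp [stdVec, hvL])
  have hvu : v - u = stdVec n (LL n hn) := by rw [hu]; abel
  set U' : Submodule ℂ (Fin n → ℂ) := W ⊓ Emod n (n - 1) with hU'def
  have hU' : finrank ℂ ↥U' + 1 = k := by
    rw [hU'def, finrank_inf_pred hn hvW (by rw [hvL]; exact one_ne_zero), hW]
  have huU' : u ∉ U' := fun h => hnot2 (by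
    rw [← hvu]; exact W.sub_mem hvW h.1)
  have hune : u ≠ 0 := fun h => by
    apply hnot2
    rw [← hvu, h, sub_zero]
    exact hvW
  set U : Submodule ℂ (Fin n → ℂ) := U' ⊔ (ℂ ∙ u) with hUdef
  have hinf : U' ⊓ (ℂ ∙ u) = ⊥ := by
    rw [eq_bot_iff]
    rintro y ⟨hy1, hy2⟩
    rw [SetLike.mem_coe, Submodule.mem_span_singleton] at hy2
    obtain ⟨a, rfl⟩ := hy2
    rcases eq_or_ne a 0 with rfl | ha
    · simp
    · exfalso
      apply huU'
      have : a⁻¹ • (a • u) ∈ U' := U'.smul_mem _ hy1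
      rwa [smul_smul, inv_mul_cancel₀ ha, one_smul] at this
  have hU : finrank ℂ ↥U = k := by
    have := Submodule.finrank_sup_add_finrank_inf_eq U' (ℂ ∙ u)
    rw [hinf, finrank_bot, finrank_span_singleton hune] at this
    rw [hUdef]
    omega
  have hUE : U ≤ Emod n (n - 1) := by
    rw [hUdef]
    refine sup_le inf_le_right ?_
    rw [Submodule.span_le, Set.singleton_subset_iff]
    exact huE
  have hU'E : U' ≤ Emod n (n - 1) := inf_le_right
  have hJs := JF_subset hn hUE
  have hJs' := JF_subset hn hU'E
  have hcardJ : (JF U).card = k := by rw [card_JF, hU]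
  have hcardJ' : (JF U').card + 1 = k := by rw [card_JF]; exact hU'
  -- pick the extra jump index
  have hex : ∃ j₀, j₀ ∈ JF U ∧ j₀ ∉ JF U' := by
    by_contra hcon
    push_neg at hcon
    have hsub : JF U ⊆ JF U' := fun j hj => hcon j hj
    have := Finset.card_le_card hsub
    omega
  obtain ⟨j₀, hj₀J, hj₀J'⟩ := hex
  obtain ⟨wv, hwU, hwE, hwnz, hwnE⟩ := echelon hj₀J
  -- wv is not in U'
  have hwU' : wv ∉ U' := by
    intro hmem
    apply hj₀J'
    rw [mem_JF]
    have hle : U' ⊓ Emod n (j₀ : ℕ) ≤ U' ⊓ Emod n ((j₀ : ℕ) + 1) :=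
      inf_le_inf_left U' (Emod_mono (by omega))
    have hlt : U' ⊓ Emod n (j₀ : ℕ) < U' ⊓ Emod n ((j₀ : ℕ) + 1) :=
      lt_of_le_of_ne hle (fun h => hwnE (by
        have : wv ∈ U' ⊓ Emod n ((j₀ : ℕ) + 1) := ⟨hmem, hwE⟩
        rw [← h] at this
        exact this.2))
    have := Submodule.finrank_lt_finrank_of_lt hlt
    show dd U' ((j₀ : ℕ) + 1) ≠ dd U' (j₀ : ℕ)
    unfold dd
    omega
  -- decompose wv
  obtain ⟨u', hu'U', z, hz, hsum⟩ := Submodule.mem_sup.mp hwU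
  rw [Submodule.mem_span_singleton] at hz
  obtain ⟨cc, rfl⟩ := hz
  have hcc : cc ≠ 0 := by
    rintro rfl
    rw [zero_smul, add_zero] at hsum
    exact hwU' (hsum ▸ hu'U')
  set w₀ : Fin n → ℂ := cc⁻¹ • wv with hw₀
  have hw₀eq : w₀ = cc⁻¹ • u' + u := by
    rw [hw₀, ← hsum, smul_add, smul_smul, inv_mul_cancel₀ hcc, one_smul]
  have hw₀E : w₀ ∈ Emod n ((j₀ : ℕ) + 1) := (Emod n _).smul_mem _ hwE
  have hw₀nz : w₀ j₀ ≠ 0 := by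
    rw [hw₀]
    simp only [Pi.smul_apply, smul_eq_mul]
    exact mul_ne_zero (inv_ne_zero hcc) hwnz
  -- columns
  obtain ⟨w, hw⟩ := exists_cols U'
  set c : Fin n → (Fin n → ℂ) := fun j =>
    if j ∈ JF U' then w j else if j = j₀ then w₀ else stdVec n j with hc
  have hLJ' : LL n hn ∉ JF U' := fun h => by have := hJs' _ h; simp [LL] at this; omega
  have hj₀L : j₀ ≠ LL n hn := fun h => by
    have := hJs _ hj₀J; rw [h] at this; simp [LL] at this; omega
  have hc1 : ∀ j : Fin n, c j ∈ Emod n ((j : ℕ) + 1) := by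
    intro j
    by_cases h : j ∈ JF U'
    · simpa [hc, h] using (hw j h).2.1
    · by_cases h2 : j = j₀
      · subst h2; simpa [hc, h] using hw₀E
      · simpa [hc, h, h2] using stdVec_mem_Emod j
  have hc2 : ∀ j : Fin n, c j j ≠ 0 := by
    intro j
    by_cases h : j ∈ JF U'
    · simpa [hc, h] using (hw j h).2.2
    · by_cases h2 : j = j₀
      · subst h2; simpa [hc, h] using hw₀nz
      · simp [hc, h, h2, stdVec]
  have hc3 : c (LL n hn) = stdVec n (LL n hn) := by simp [hc, hLJ', hj₀L.symm, Ne.symm hj₀L]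
  set Jrep : Finset (Fin n) := insert j₀ (JF U') with hJrep
  have hJrepal : ∀ j ∈ Jrep, (j : ℕ) + 1 < n := by
    intro j hj
    rcases Finset.mem_insert.mp hj with rfl | hj
    · exact hJs _ hj₀J
    · exact hJs' _ hj
  have hJrepcard : Jrep.card = k := by
    rw [hJrep, Finset.card_insert_of_notMem hj₀J']
    omega
  have herase : Jrep.erase j₀ = JF U' := by
    rw [hJrep, Finset.erase_insert hj₀J']
  refine ⟨Submodule.span ℂ (insert (hatVec n j₀) (stdVec n '' ↑(Jrep.erase j₀))),
    Or.inr ⟨Jrep, j₀, Finset.mem_insert_self _ _, hJrepal, hJrepcard, rfl⟩,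
    colMat c, memB_colMat hn c hc1 hc2 hc3, ?_⟩
  apply map_eq_of (memB_colMat hn c hc1 hc2 hc3).1
  · rintro y hy
    rcases Set.mem_insert_iff.mp hy with rfl | ⟨j, hj, rfl⟩
    · -- the hat vector
      rw [hatVec_eq hn, map_add, toLin'_colMat, toLin'_colMat]
      have e1 : c j₀ = w₀ := by simp [hc, hj₀J']
      have e2 : c (LL n hn) = stdVec n (LL n hn) := hc3
      rw [e1, e2, hw₀eq]
      have : cc⁻¹ • u' + u + stdVec n (LL n hn) = cc⁻¹ • u' + v := by
        rw [hu]; abel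
      rw [this]
      exact W.add_mem (W.smul_mem _ hu'U'.1) hvW
    · rw [herase] at hj
      rw [stdVec, toLin'_colMat]
      have hjJ : j ∈ JF U' := by exact_mod_cast hj
      simp only [hc, if_pos hjJ]
      exact ((hw j hjJ).1 : w j ∈ U').1
  · rw [span_hat Jrep j₀ hn (Finset.mem_insert_self _ _) (LL_not_mem hn hJrepal),
      finrank_HS _ _ _ (Finset.mem_insert_self _ _) (LL_not_mem hn hJrepal), hJrepcard, hW]

lemma exists_rep {k : ℕ} (hn2 : 2 ≤ n) (hk1 : 1 ≤ k) (W : Submodule ℂ (Fin n → ℂ))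
    (hW : finrank ℂ ↥W = k) :
    ∃ R ∈ repSet n k (Nat.le_of_succ_le hn2), ∃ g, memB n g ∧ R.map (Matrix.toLin' g) = W := by
  by_cases h1 : W ≤ Emod n (n - 1)
  · exact exists_g_case1 hn2 W hW h1
  · by_cases h2 : stdVec n (LL n (by omega)) ∈ W
    · exact exists_g_case2 hn2 hk1 W hW h2
    · exact exists_g_case3 hn2 hk1 W hW h1 h2

end S15

/-- Every `k`-dimensional subspace of `ℂⁿ` lies in the `B_{n-1}`-orbit
of exactly one representative subspace, and no two distinct representative subspaces lie
in the same `B_{n-1}`-orbit. -/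
theorem statement15 (n k : ℕ) (hn : 2 ≤ n) (hk1 : 1 ≤ k) (hkn : k ≤ n) :
    (∀ W : Submodule ℂ (Fin n → ℂ), Module.finrank ℂ W = k →
      ∃! R : Submodule ℂ (Fin n → ℂ), R ∈ repSet n k (by omega) ∧
        ∃ g, memB n g ∧ R.map (Matrix.toLin' g) = W) ∧
    (∀ R₁ ∈ repSet n k (by omega : 1 ≤ n), ∀ R₂ ∈ repSet n k (by omega : 1 ≤ n),
      (∃ g, memB n g ∧ R₁.map (Matrix.toLin' g) = R₂) → R₁ = R₂) := by
  constructor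
  · intro W hW
    obtain ⟨R, hR, g, hg, hmap⟩ := S15.exists_rep hn hk1 W hW
    refine ⟨R, ⟨hR, g, hg, hmap⟩, ?_⟩
    rintro R' ⟨hR', g', hg', hmap'⟩
    refine S15.rep_eq_of_inv hn hk1 hR' hR (fun i hi => ?_) (fun i hi => ?_)
    · rw [← S15.inv_d hg' R' i, hmap', ← S15.inv_d hg R i, hmap]
    · rw [← S15.inv_h hg' R' i (by omega), hmap', ← S15.inv_h hg R i (by omega), hmap]
  · rintro R₁ hR₁ R₂ hR₂ ⟨g, hg, hmap⟩
    refine S15.rep_eq_of_inv hn hk1 hR₁ hR₂ (fun i hi => ?_) (fun i hi => ?_)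
    · rw [← S15.inv_d hg R₁ i, hmap]
    · rw [← S15.inv_h hg R₁ i (by omega), hmap]

end
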